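/- Let G₁ be an additive commutative group, G₂ a multiplicative commutative group, and e : G₁ → G₁ → G₂ a symmetric bilinear pairing. Let P, Q, W ∈ G₁ and let α, x_S, r, h be integers. Set P_pub = α·P, Y_S = x_S·P, D_S = α·Q, R = r·P, and V = D_S + r·W + h·(x_S·P_pub). Then e(V, P) = e(Q + h·Y_S, P_pub) · e(R, W). (This is the correctness of Kumar et al.'s CLS scheme: an honestly generated signature (R, V) on a message with hash value h under state information with hash W passes the verification equation.) -/

import Mathlib

private lemma pairing_zsmul_left {G₁ G₂ : Type*} [AddCommGroup G₁] [CommGroup G₂]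
    (e : G₁ → G₁ → G₂)
    (he_left : ∀ a b c : G₁, e (a + b) c = e a c * e b c)
    (n : ℤ) (a c : G₁) : e (n • a) c = e a c ^ n := by
  let f : G₁ →+ Additive G₂ :=
    { toFun := fun x => Additive.ofMul (e x c)
      map_zero' := by
        have h := he_left 0 0 c
        simp only [add_zero] at h
        have : e 0 c = 1 := by
          have := mul_right_cancel (a := e 0 c) (b := e 0 c) (c := 1) ?_
          · exact this
          · rw [one_mul]; exact h.symm
        simpa using this
      map_add' := fun x y => by simpa using congrArg Additive.ofMul (he_left x y c) }
  have := map_zsmul f n a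
  simpa [f] using congrArg Additive.toMul this

/-- Correctness of Kumar et al.'s CLS scheme: an honestly generated signature
`(R, V) = (r • P, D_S + r • W + h • (x_S • P_pub))` on a message with hash value `h`
under state information with hash `W` passes the verification equation. -/
theorem kumar_verification_correctness
    {G₁ G₂ : Type*} [AddCommGroup G₁] [CommGroup G₂]
    (e : G₁ → G₁ → G₂)
    (he_left : ∀ a b c : G₁, e (a + b) c = e a c * e b c)
    (he_right : ∀ a b c : G₁, e a (b + c) = e a b * e a c)
    (he_symm : ∀ a b : G₁, e a b = e b a)
    (P Q W : G₁) (α x_S r h : ℤ)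
    (P_pub : G₁) (hPpub : P_pub = α • P)
    (Y_S : G₁) (hYS : Y_S = x_S • P)
    (D_S : G₁) (hDS : D_S = α • Q)
    (R : G₁) (hR : R = r • P)
    (V : G₁) (hV : V = D_S + r • W + h • (x_S • P_pub)) :
    e V P = e (Q + h • Y_S) P_pub * e R W := by
  have hzr : ∀ (n : ℤ) (a c : G₁), e a (n • c) = e a c ^ n := by
    intro n a c
    rw [he_symm, pairing_zsmul_left e he_left, he_symm]
  have hzl := pairing_zsmul_left e he_left
  subst hPpub hYS hDS hR hV
  simp only [he_left, hzl, hzr, he_symm W P]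
  exact mul_right_comm _ _ _
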